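/- Under simple random sampling of size n and conditioning on A₀ = {s : ∀h, |s ∩ U_h| = n_h}, the conditional inclusion probability of a unit k in stratum U_h equals n_h/N_h. -/

import Mathlib

open Finset

lemma count_strat {U : Type*} [DecidableEq U] {H : ℕ} (st : U → Fin H) (A : Finset U)
    (m : Fin H → ℕ) :
    (A.powerset.filter (fun s => ∀ h, (s.filter (fun k => st k = h)).card = m h)).card
      = ∏ h, ((A.filter (fun k => st k = h)).card).choose (m h) := by
  have hcard : ∏ h, ((A.filter (fun k => st k = h)).card).choose (m h)
      = (Fintype.piFinset (fun h => (A.filter (fun k => st k = h)).powersetCard (m h))).card := by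
    simp [Fintype.card_piFinset, Finset.card_powersetCard]
  rw [hcard]
  apply Finset.card_bij' (fun s _ => fun h => s.filter (fun k => st k = h))
    (fun f _ => Finset.univ.biUnion f)
  · intro s hs
    simp only [mem_filter, mem_powerset] at hs
    simp only [Fintype.mem_piFinset, mem_powersetCard]
    intro h
    exact ⟨Finset.filter_subset_filter _ hs.1, hs.2 h⟩
  · intro f hf
    simp only [Fintype.mem_piFinset, mem_powersetCard] at hf
    have key : ∀ h, (Finset.univ.biUnion f).filter (fun k => st k = h) = f h := by
      intro h
      ext x
      simp only [mem_filter, mem_biUnion, mem_univ, true_and]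
      constructor
      · rintro ⟨⟨h', hx⟩, hst⟩
        have := (hf h').1 hx
        rw [mem_filter] at this
        rw [← hst, this.2]; exact hx
      · intro hx
        have := (hf h).1 hx
        rw [mem_filter] at this
        exact ⟨⟨h, hx⟩, this.2⟩
    simp only [mem_filter, mem_powerset]
    constructor
    · intro x hx
      rw [mem_biUnion] at hx
      obtain ⟨h', _, hx⟩ := hx
      exact (Finset.filter_subset _ _) ((hf h').1 hx)
    · intro h; rw [key h]; exact (hf h).2
  · intro s hs
    ext x
    simp only [mem_biUnion, mem_univ, true_and, mem_filter]
    exact ⟨fun ⟨_, hx, _⟩ => hx, fun hx => ⟨st x, hx, rfl⟩⟩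
  · intro f hf
    simp only [Fintype.mem_piFinset, mem_powersetCard] at hf
    funext h
    ext x
    simp only [mem_filter, mem_biUnion, mem_univ, true_and]
    constructor
    · rintro ⟨⟨h', hx⟩, hst⟩
      have := (hf h').1 hx
      rw [mem_filter] at this
      rw [← hst, this.2]; exact hx
    · intro hx
      have := (hf h).1 hx
      rw [mem_filter] at this
      exact ⟨⟨h, hx⟩, this.2⟩

lemma count_filter_mem {U : Type*} [Fintype U] [DecidableEq U] {H : ℕ} (st : U → Fin H)
    (k : U) (m : Fin H → ℕ) (hmpos : 0 < m (st k)) :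
    ((Finset.univ.powerset.filter
        (fun s : Finset U => ∀ h', (s.filter (fun x => st x = h')).card = m h')).filter
      (fun s => k ∈ s)).card
      = ((Finset.univ.erase k).powerset.filter
          (fun t : Finset U => ∀ h', (t.filter (fun x => st x = h')).card
            = if h' = st k then m (st k) - 1 else m h')).card := by
  apply Finset.card_bij' (fun s _ => s.erase k) (fun t _ => insert k t)
  · intro s hs
    exact Finset.insert_erase (mem_filter.mp hs).2
  · intro t ht
    have hkt : k ∉ t := fun hkt =>
      (Finset.mem_erase.mp ((mem_powerset.mp (mem_filter.mp ht).1) hkt)).1 rfl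
    exact Finset.erase_insert hkt
  · intro s hs
    simp only [mem_filter, mem_powerset] at hs
    obtain ⟨⟨-, hfib⟩, hks⟩ := hs
    simp only [mem_filter, mem_powerset]
    refine ⟨Finset.erase_subset_erase _ (subset_univ s), fun h' => ?_⟩
    rw [Finset.filter_erase]
    by_cases hh : h' = st k
    · rw [if_pos hh, Finset.card_erase_of_mem (mem_filter.mpr ⟨hks, hh.symm⟩), hfib, hh]
    · rw [if_neg hh, Finset.erase_eq_of_notMem (fun hc => hh ((mem_filter.mp hc).2).symm), hfib]
  · intro t ht
    simp only [mem_filter, mem_powerset] at ht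
    obtain ⟨htsub, hfib⟩ := ht
    have hkt : k ∉ t := fun hkt => (Finset.mem_erase.mp (htsub hkt)).1 rfl
    simp only [mem_filter, mem_powerset]
    refine ⟨⟨subset_univ _, fun h' => ?_⟩, mem_insert_self _ _⟩
    rw [Finset.filter_insert]
    by_cases hh : h' = st k
    · rw [if_pos hh.symm, Finset.card_insert_of_notMem (fun hc => hkt (mem_filter.mp hc).1),
        hfib, if_pos hh, hh]
      omega
    · rw [if_neg (fun e => hh e.symm), hfib, if_neg hh]

/-- Under simple random sampling of size `n`, conditioning on the strata sample sizes
`A₀ = {s : ∀ h, |s ∩ U_h| = n_h}`, the conditional inclusion probability of a unit `k`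
in stratum `U_h` equals `n_h / N_h`. -/
theorem srs_post_stratification_inclusion {U : Type*} [Fintype U] [DecidableEq U]
    (H n : ℕ) (st : U → Fin H) (nh : Fin H → ℕ)
    (hpos : ∀ h, 0 < nh h)
    (hle : ∀ h, nh h ≤ (Finset.univ.filter (fun k => st k = h)).card)
    (hsum : ∑ h, nh h = n)
    (A₀ : Finset (Finset U))
    (hA₀ : A₀ = (Finset.univ.powersetCard n).filter
      (fun s : Finset U => ∀ h, (s.filter (fun k => st k = h)).card = nh h))
    (p : Finset U → ℝ)
    (hp : ∀ s : Finset U, p s =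
      if s.card = n then ((Finset.univ.powersetCard n : Finset (Finset U)).card : ℝ)⁻¹ else 0)
    (k : U) (h : Fin H) (hk : st k = h) :
    (∑ s ∈ A₀.filter (fun s => k ∈ s), p s) / (∑ s ∈ A₀, p s) =
      (nh h : ℝ) / ((Finset.univ.filter (fun k => st k = h)).card : ℝ) := by
  classical
  subst hk
  -- notation
  have hcardn : ∀ s : Finset U, (∀ h', (s.filter (fun x => st x = h')).card = nh h') →
      s.card = n := by
    intro s hs
    rw [Finset.card_eq_sum_card_fiberwise (f := st) (t := Finset.univ)
      (fun x _ => Finset.mem_univ _)]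
    simp only [hs]; exact hsum
  have hA₀' : A₀ = Finset.univ.powerset.filter
      (fun s : Finset U => ∀ h', (s.filter (fun x => st x = h')).card = nh h') := by
    rw [hA₀]; ext s
    simp only [mem_filter, mem_powersetCard, mem_powerset, subset_univ, true_and]
    exact ⟨fun ⟨_, hs⟩ => hs, fun hs => ⟨hcardn s hs, hs⟩⟩
  have hA₀mem : ∀ s ∈ A₀, s.card = n := by
    intro s hs
    rw [hA₀'] at hs
    simp only [mem_filter, mem_powerset] at hs
    exact hcardn s hs.2
  have hcount2 : A₀.card = ∏ h', ((Finset.univ.filter (fun x => st x = h')).card).choose (nh h') := by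
    rw [hA₀', count_strat]
  have hcount1 : (A₀.filter (fun s => k ∈ s)).card
      = ∏ h', (((Finset.univ.erase k).filter (fun x => st x = h')).card).choose
          (if h' = st k then nh (st k) - 1 else nh h') := by
    rw [hA₀', count_filter_mem st k nh (hpos (st k)), count_strat]
  have hNerase : ∀ h', ((Finset.univ.erase k).filter (fun x => st x = h')).card
      = if h' = st k then (Finset.univ.filter (fun x => st x = st k)).card - 1
        else (Finset.univ.filter (fun x => st x = h')).card := by
    intro h'
    rw [Finset.filter_erase]
    by_cases hh : h' = st k
    · rw [if_pos hh, hh]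
      exact Finset.card_erase_of_mem (mem_filter.mpr ⟨mem_univ k, rfl⟩)
    · rw [if_neg hh, Finset.erase_eq_of_notMem (fun hc => hh ((mem_filter.mp hc).2).symm)]
  set N : ℕ := (Finset.univ.filter (fun x => st x = st k)).card with hN
  have hNgoal : (Finset.univ.filter (fun x => st x = st k)).card = N := rfl
  have hNh : 0 < N := lt_of_lt_of_le (hpos (st k)) (hle (st k))
  have hnhN : nh (st k) ≤ N := hle (st k)
  have hnhpos := hpos (st k)
  -- split off the h-factor from both products
  set P : ℕ := ∏ h' ∈ Finset.univ.erase (st k),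
      ((Finset.univ.filter (fun x => st x = h')).card).choose (nh h') with hP
  have hsplit2 : ∏ h', ((Finset.univ.filter (fun x => st x = h')).card).choose (nh h')
      = N.choose (nh (st k)) * P :=
    (Finset.mul_prod_erase _ _ (mem_univ (st k))).symm
  have hsplit1 : ∏ h', (((Finset.univ.erase k).filter (fun x => st x = h')).card).choose
        (if h' = st k then nh (st k) - 1 else nh h')
      = (N - 1).choose (nh (st k) - 1) * P := by
    rw [← Finset.mul_prod_erase _
      (fun h' => (((Finset.univ.erase k).filter (fun x => st x = h')).card).choose
        (if h' = st k then nh (st k) - 1 else nh h')) (mem_univ (st k))]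
    congr 1
    · rw [hNerase (st k), if_pos rfl, if_pos rfl]
    · refine Finset.prod_congr rfl fun h' hh' => ?_
      have hne : h' ≠ st k := (Finset.mem_erase.mp hh').1
      rw [hNerase h', if_neg hne, if_neg hne]
  -- positivity
  have hnn : n ≤ Fintype.card U := by
    rw [← hsum, ← Finset.card_univ,
      Finset.card_eq_sum_card_fiberwise (f := st) (t := Finset.univ) (fun x _ => Finset.mem_univ _)]
    exact Finset.sum_le_sum fun h' _ => hle h'
  have hc0 : ((Finset.univ.powersetCard n : Finset (Finset U)).card : ℝ) ≠ 0 := by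
    rw [Finset.card_powersetCard, Finset.card_univ]
    exact_mod_cast (Nat.choose_pos hnn).ne'
  have hPpos : 0 < P := Finset.prod_pos fun h' _ => Nat.choose_pos (hle h')
  have hCpos : 0 < N.choose (nh (st k)) := Nat.choose_pos hnhN
  -- evaluate the sums
  have hsum2 : (∑ s ∈ A₀, p s) = (A₀.card : ℝ) *
      ((Finset.univ.powersetCard n : Finset (Finset U)).card : ℝ)⁻¹ := by
    rw [Finset.sum_congr rfl (fun s hs => by rw [hp s, if_pos (hA₀mem s hs)]),
      Finset.sum_const, nsmul_eq_mul]
  have hsum1 : (∑ s ∈ A₀.filter (fun s => k ∈ s), p s)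
      = ((A₀.filter (fun s => k ∈ s)).card : ℝ) *
      ((Finset.univ.powersetCard n : Finset (Finset U)).card : ℝ)⁻¹ := by
    rw [Finset.sum_congr rfl (fun s hs => by
        rw [hp s, if_pos (hA₀mem s (Finset.mem_filter.mp hs).1)]),
      Finset.sum_const, nsmul_eq_mul]
  rw [hsum1, hsum2, mul_div_mul_right _ _ (inv_ne_zero hc0)]
  rw [hcount1, hsplit1, hcount2, hsplit2]
  -- key choose identity
  have hkey : (N - 1).choose (nh (st k) - 1) * N = N.choose (nh (st k)) * nh (st k) := by
    have h1 : N = (N - 1) + 1 := by omega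
    have h2 : nh (st k) = (nh (st k) - 1) + 1 := by omega
    have := Nat.add_one_mul_choose_eq (N - 1) (nh (st k) - 1)
    rw [← h1, ← h2] at this
    rw [Nat.mul_comm]
    exact this
  have hfinal : (N - 1).choose (nh (st k) - 1) * P * N = nh (st k) * (N.choose (nh (st k)) * P) :=
    calc (N - 1).choose (nh (st k) - 1) * P * N
        = (N - 1).choose (nh (st k) - 1) * N * P := by ring
      _ = N.choose (nh (st k)) * nh (st k) * P := by rw [hkey]
      _ = nh (st k) * (N.choose (nh (st k)) * P) := by ring
  rw [div_eq_div_iff (by exact_mod_cast (Nat.mul_pos hCpos hPpos).ne')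
    (by exact_mod_cast hNh.ne')]
  exact_mod_cast hfinal
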